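/- In the Lie algebra with basis E₁,E₂,E₃ satisfying [E₁,E₂]=E₃, [E₂,E₃]=E₁, [E₁,E₃]=-E₂, equipped with the inner product making aE₁, aE₂, cE₃ orthonormal with a ≠ c positive, a vector X = x₁E₁ + x₂E₂ + x₃E₃ is a geodesic vector if and only if x₃ = 0 or x₁ = x₂ = 0. -/

import Mathlib

/-- In the Lie algebra with basis `E₁,E₂,E₃`, `[E₁,E₂]=E₃`, `[E₂,E₃]=E₁`, `[E₁,E₃]=-E₂`,
with the inner product `B` making `aE₁, aE₂, cE₃` orthonormal (`a ≠ c` positive), a vector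
`X = x₁E₁ + x₂E₂ + x₃E₃` is geodesic iff `x₃ = 0` or `x₁ = x₂ = 0`. -/
theorem stmt_14 {V : Type*} [AddCommGroup V] [Module ℝ V]
    (bracket : V →ₗ[ℝ] V →ₗ[ℝ] V)
    (halt : ∀ X, bracket X X = 0)
    (E : Module.Basis (Fin 3) ℝ V)
    (h12 : bracket (E 0) (E 1) = E 2)
    (h23 : bracket (E 1) (E 2) = E 0)
    (h13 : bracket (E 0) (E 2) = -E 1)
    (a c : ℝ) (ha : 0 < a) (hc : 0 < c) (hac : a ≠ c)
    (B : V →ₗ[ℝ] V →ₗ[ℝ] ℝ)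
    (hBsymm : ∀ X Y, B X Y = B Y X) (hBpos : ∀ X, X ≠ 0 → 0 < B X X)
    (hBon : ∀ i j : Fin 3, B (![a, a, c] i • E i) (![a, a, c] j • E j)
      = if i = j then 1 else 0)
    (x₁ x₂ x₃ : ℝ) :
    (∀ Y, B (bracket (x₁ • E 0 + x₂ • E 1 + x₃ • E 2) Y)
        (x₁ • E 0 + x₂ • E 1 + x₃ • E 2) = 0)
      ↔ (x₃ = 0 ∨ (x₁ = 0 ∧ x₂ = 0)) := by
  have skew : ∀ X Y : V, bracket X Y = - bracket Y X := by
    intro X Y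
    have h1 := halt (X + Y)
    simp [map_add, LinearMap.add_apply, halt] at h1
    exact eq_neg_of_add_eq_zero_right h1
  have h21 : bracket (E 1) (E 0) = -E 2 := by rw [skew, h12]
  have h31 : bracket (E 2) (E 0) = E 1 := by rw [skew, h13]; simp
  have h32 : bracket (E 2) (E 1) = -E 0 := by rw [skew, h23]
  have hB00 : B (E 0) (E 0) = 1/(a*a) := by
    have h := hBon 0 0
    simp [map_smul, LinearMap.smul_apply, smul_eq_mul] at h
    rw [eq_div_iff (by positivity)]
    linear_combination h
  have hB11 : B (E 1) (E 1) = 1/(a*a) := by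
    have h := hBon 1 1
    simp [map_smul, LinearMap.smul_apply, smul_eq_mul] at h
    rw [eq_div_iff (by positivity)]
    linear_combination h
  have hB22 : B (E 2) (E 2) = 1/(c*c) := by
    have h := hBon 2 2
    simp [map_smul, LinearMap.smul_apply, smul_eq_mul] at h
    rw [eq_div_iff (by positivity)]
    linear_combination h
  have hB01 : B (E 0) (E 1) = 0 := by
    have h := hBon 0 1
    simp [map_smul, LinearMap.smul_apply, smul_eq_mul, mul_eq_zero, ha.ne'] at h
    exact h
  have hB02 : B (E 0) (E 2) = 0 := by
    have h := hBon 0 2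
    simp [map_smul, LinearMap.smul_apply, smul_eq_mul, mul_eq_zero, ha.ne', hc.ne'] at h
    exact h
  have hB12 : B (E 1) (E 2) = 0 := by
    have h := hBon 1 2
    simp [map_smul, LinearMap.smul_apply, smul_eq_mul, mul_eq_zero, ha.ne', hc.ne'] at h
    exact h
  have hB10 : B (E 1) (E 0) = 0 := by rw [hBsymm]; exact hB01
  have hB20 : B (E 2) (E 0) = 0 := by rw [hBsymm]; exact hB02
  have hB21 : B (E 2) (E 1) = 0 := by rw [hBsymm]; exact hB12
  constructor
  · intro h
    have e1 := h (E 0)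
    have e2 := h (E 1)
    simp [map_add, map_smul, map_neg, LinearMap.add_apply, LinearMap.smul_apply,
      LinearMap.neg_apply, halt, h12, h23, h13, h21, h31, h32,
      hB00, hB11, hB22, hB01, hB02, hB12, hB10, hB20, hB21, smul_eq_mul] at e1 e2
    have hne : c * c - a * a ≠ 0 := by
      intro h'
      exact hac (by nlinarith)
    field_simp [ha.ne', hc.ne'] at e1 e2
    have h1 : x₂ * x₃ * (c * c - a * a) = 0 := by linear_combination e1
    have h2 : x₁ * x₃ * (c * c - a * a) = 0 := by linear_combination -e2
    have h1' : x₂ * x₃ = 0 := by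
      rcases mul_eq_zero.mp h1 with h' | h'
      · exact h'
      · exact absurd h' hne
    have h2' : x₁ * x₃ = 0 := by
      rcases mul_eq_zero.mp h2 with h' | h'
      · exact h'
      · exact absurd h' hne
    by_cases h3 : x₃ = 0
    · exact Or.inl h3
    · exact Or.inr ⟨by
        rcases mul_eq_zero.mp h2' with h' | h'
        exacts [h', absurd h' h3], by
        rcases mul_eq_zero.mp h1' with h' | h'
        exacts [h', absurd h' h3]⟩
  · intro hx Y
    rw [← E.sum_repr Y, Fin.sum_univ_three]
    simp [map_add, map_smul, map_neg, LinearMap.add_apply, LinearMap.smul_apply,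
      LinearMap.neg_apply, halt, h12, h23, h13, h21, h31, h32,
      hB00, hB11, hB22, hB01, hB02, hB12, hB10, hB20, hB21, smul_eq_mul]
    rcases hx with h3 | ⟨h1, h2⟩
    · subst h3; ring
    · subst h1; subst h2; ring
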